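/- Under the marshalling axioms, hash computations that use only the unboxed elements of corresponding structures agree: if R a b is a marshalling correspondence and f is any function from lists of integers to integers, then applying f to the sequence of unboxed payloads encountered in a fixed deterministic (depth-first, index-ordered) traversal of the structure reachable from a equals applying f to the corresponding traversal from b, provided both traversals terminate. -/

import Mathlib

/-- Heap values: unboxed words, or pointers to buffers. -/
inductive Value where
  | unboxed (z : ℤ)
  | ptr (a : ℕ)
deriving DecidableEq

/-- A heap maps each address to the buffer (list of values) it holds. -/
def Heap : Type := ℕ → List Value

/-- Reachability from a root value: the closure under following pointers to
buffer elements. -/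
inductive Reach (heap : Heap) (root : Value) : Value → Prop
  | root : Reach heap root root
  | step {p : ℕ} {v : Value} :
      Reach heap root (.ptr p) → v ∈ heap p → Reach heap root v

/-- `Edge heap v i w`: the buffer pointed by `v` has `w` as its `i`-th
component (a points-to edge labeled `i`). -/
def Edge (heap : Heap) (v : Value) (i : ℕ) (w : Value) : Prop :=
  ∃ p : ℕ, v = .ptr p ∧ (heap p)[i]? = some w

/-- Closure of a relation under taking equally-indexed components of
corresponding buffers. -/
def ClosedUnderComponents (heap₁ heap₂ : Heap) (S : Value → Value → Prop) : Prop :=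
  ∀ p q : ℕ, S (.ptr p) (.ptr q) →
    ∀ (i : ℕ) (h₁ : i < (heap₁ p).length) (h₂ : i < (heap₂ q).length),
      S ((heap₁ p).get ⟨i, h₁⟩) ((heap₂ q).get ⟨i, h₂⟩)

/-- Fueled deterministic depth-first, index-ordered traversal: visits buffer
elements in index order, records unboxed payloads, and visits each distinct
pointer at most once (using pointer equality, i.e. address equality, to detect
revisits).  Returns the recorded payload list and the visited set, or `none`
if the fuel runs out. -/
def traverse (heap : Heap) : ℕ → List ℕ → List Value → Option (List ℤ × List ℕ)
  | _, visited, [] => some ([], visited)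
  | 0, _, _ :: _ => none
  | fuel + 1, visited, .unboxed z :: rest =>
      (traverse heap fuel visited rest).map fun (l, vis) => (z :: l, vis)
  | fuel + 1, visited, .ptr p :: rest =>
      if p ∈ visited then traverse heap fuel visited rest
      else traverse heap fuel (p :: visited) (heap p ++ rest)

lemma forall₂_mem_left {α β} {S : α → β → Prop} :
    ∀ {l₁ : List α} {l₂ : List β}, List.Forall₂ S l₁ l₂ →
      ∀ {a}, a ∈ l₁ → ∃ b ∈ l₂, S a b := by
  intro l₁ l₂ h
  induction h with
  | nil => intro a ha; simp at ha
  | cons hs _ ih =>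
      intro a ha
      rcases List.mem_cons.1 ha with rfl | ha
      · exact ⟨_, List.mem_cons_self, hs⟩
      · obtain ⟨b, hb, hsb⟩ := ih ha
        exact ⟨b, List.mem_cons_of_mem _ hb, hsb⟩

lemma forall₂_mem_right {α β} {S : α → β → Prop} :
    ∀ {l₁ : List α} {l₂ : List β}, List.Forall₂ S l₁ l₂ →
      ∀ {b}, b ∈ l₂ → ∃ a ∈ l₁, S a b := by
  intro l₁ l₂ h
  induction h with
  | nil => intro b hb; simp at hb
  | cons hs _ ih =>
      intro b hb
      rcases List.mem_cons.1 hb with rfl | hb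
      · exact ⟨_, List.mem_cons_self, hs⟩
      · obtain ⟨a, ha, hsa⟩ := ih hb
        exact ⟨a, List.mem_cons_of_mem _ ha, hsa⟩

lemma traverse_sim
    (heap₁ heap₂ : Heap) (R : Value → Value → Prop)
    (hbox : ∀ a b, R a b → ((∃ z, a = .unboxed z) ↔ (∃ z, b = .unboxed z)))
    (hlen : ∀ p q : ℕ, R (.ptr p) (.ptr q) → (heap₁ p).length = (heap₂ q).length)
    (hcomp : ClosedUnderComponents heap₁ heap₂ R)
    (hunboxed : ∀ z w : ℤ, R (.unboxed z) (.unboxed w) → z = w)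
    (hptr : ∀ p₁ q₁ p₂ q₂ : ℕ, R (.ptr p₁) (.ptr q₁) → R (.ptr p₂) (.ptr q₂) →
      (p₁ = p₂ ↔ q₁ = q₂)) :
    ∀ (fuel₁ fuel₂ : ℕ) (vis₁ vis₂ : List ℕ) (st₁ st₂ : List Value)
      (l₁ l₂ : List ℤ) (w₁ w₂ : List ℕ),
      List.Forall₂ (fun p q => R (.ptr p) (.ptr q)) vis₁ vis₂ →
      List.Forall₂ R st₁ st₂ →
      traverse heap₁ fuel₁ vis₁ st₁ = some (l₁, w₁) →
      traverse heap₂ fuel₂ vis₂ st₂ = some (l₂, w₂) →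
      l₁ = l₂ := by
  intro fuel₁
  induction fuel₁ with
  | zero =>
      intro fuel₂ vis₁ vis₂ st₁ st₂ l₁ l₂ w₁ w₂ hvis hst h₁ h₂
      cases hst with
      | nil =>
          simp [_root_.traverse] at h₁ h₂
          rw [h₁.1, h₂.1]
      | cons hab hrest => simp [_root_.traverse] at h₁
  | succ n ih =>
      intro fuel₂ vis₁ vis₂ st₁ st₂ l₁ l₂ w₁ w₂ hvis hst h₁ h₂
      cases hst with
      | nil =>
          simp [_root_.traverse] at h₁ h₂
          rw [h₁.1, h₂.1]
      | @cons a b st₁' st₂' hab hrest =>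
          cases fuel₂ with
          | zero =>
              cases b <;> simp [_root_.traverse] at h₂
          | succ m =>
            cases a with
            | unboxed z =>
                obtain ⟨z', rfl⟩ := (hbox _ _ hab).1 ⟨z, rfl⟩
                have hz : z = z' := hunboxed _ _ hab
                simp only [_root_.traverse, Option.map_eq_some_iff] at h₁ h₂
                obtain ⟨⟨l₁', w₁'⟩, t₁, e₁⟩ := h₁
                obtain ⟨⟨l₂', w₂'⟩, t₂, e₂⟩ := h₂
                simp only [Prod.mk.injEq] at e₁ e₂
                rw [← e₁.1, ← e₂.1, hz, ih m vis₁ vis₂ st₁' st₂' l₁' l₂' w₁' w₂' hvis hrest t₁ t₂]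
            | ptr p =>
                have hb : ∃ q, b = .ptr q := by
                  cases b with
                  | unboxed w =>
                      exfalso
                      obtain ⟨z, hz⟩ := (hbox _ _ hab).2 ⟨w, rfl⟩
                      exact Value.noConfusion hz
                  | ptr q => exact ⟨q, rfl⟩
                obtain ⟨q, rfl⟩ := hb
                by_cases hp : p ∈ vis₁
                · have hq : q ∈ vis₂ := by
                    obtain ⟨q', hq', hRq'⟩ := forall₂_mem_left hvis hp
                    rwa [← (hptr p q' p q hRq' hab).1 rfl]
                  rw [_root_.traverse, if_pos hp] at h₁
                  rw [_root_.traverse, if_pos hq] at h₂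
                  exact ih m vis₁ vis₂ st₁' st₂' l₁ l₂ w₁ w₂ hvis hrest h₁ h₂
                · have hq : q ∉ vis₂ := by
                    intro hq
                    obtain ⟨p', hp', hRp'⟩ := forall₂_mem_right hvis hq
                    exact hp (((hptr p' q p q hRp' hab).2 rfl) ▸ hp')
                  rw [_root_.traverse, if_neg hp] at h₁
                  rw [_root_.traverse, if_neg hq] at h₂
                  have hbuf : List.Forall₂ R (heap₁ p) (heap₂ q) :=
                    List.forall₂_iff_get.2 ⟨hlen p q hab, fun i h₁' h₂' => hcomp p q hab i h₁' h₂'⟩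
                  exact ih m (p :: vis₁) (q :: vis₂) _ _ l₁ l₂ w₁ w₂
                    (List.Forall₂.cons hab hvis) (List.rel_append hbuf hrest) h₁ h₂

/-- under the marshalling axioms, hash computations using only
the unboxed elements encountered along the deterministic traversal of two
corresponding structures agree, provided both traversals terminate. -/
theorem marshalling_traversal_hashes_agree
    (heap₁ heap₂ : Heap) (R : Value → Value → Prop)
    (hbox : ∀ a b, R a b → ((∃ z, a = .unboxed z) ↔ (∃ z, b = .unboxed z)))
    (hlen : ∀ p q : ℕ, R (.ptr p) (.ptr q) → (heap₁ p).length = (heap₂ q).length)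
    (hcomp : ClosedUnderComponents heap₁ heap₂ R)
    (hunboxed : ∀ z w : ℤ, R (.unboxed z) (.unboxed w) → z = w)
    (hptr : ∀ p₁ q₁ p₂ q₂ : ℕ, R (.ptr p₁) (.ptr q₁) → R (.ptr p₂) (.ptr q₂) →
      (p₁ = p₂ ↔ q₁ = q₂))
    (a b : Value) (hab : R a b)
    (fuel₁ fuel₂ : ℕ) (l₁ l₂ : List ℤ) (vis₁ vis₂ : List ℕ)
    (h₁ : traverse heap₁ fuel₁ [] [a] = some (l₁, vis₁))
    (h₂ : traverse heap₂ fuel₂ [] [b] = some (l₂, vis₂)) :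
    ∀ f : List ℤ → ℤ, f l₁ = f l₂ := by
  intro f
  congr 1
  exact traverse_sim heap₁ heap₂ R hbox hlen hcomp hunboxed hptr fuel₁ fuel₂ [] [] [a] [b]
    l₁ l₂ vis₁ vis₂ List.Forall₂.nil (List.Forall₂.cons hab List.Forall₂.nil) h₁ h₂
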